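/- The function m(t) = Σ_k k·p_k(t), where p(t) = p(0)e^{tQ} is the distribution of the voter model birth-and-death chain with stubborn nodes, satisfies the linear ODE m'(t) = (s1·n - (s0+s1)·m(t))/(n-1). -/

import Mathlib

noncomputable def deathRate (n s1 k : ℕ) : ℝ :=
  ((k : ℝ) - s1) * ((n : ℝ) - k) / ((n : ℝ) - 1)

noncomputable def birthRate (n s0 k : ℕ) : ℝ :=
  (k : ℝ) * ((n : ℝ) - k - s0) / ((n : ℝ) - 1)

noncomputable def Qmat (n s0 s1 : ℕ) : Matrix (Fin (n + 1)) (Fin (n + 1)) ℝ :=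
  fun k j =>
    if s1 ≤ (k : ℕ) ∧ (k : ℕ) + s0 ≤ n then
      if (j : ℕ) + 1 = (k : ℕ) then deathRate n s1 k
      else if (j : ℕ) = (k : ℕ) + 1 then birthRate n s0 k
      else if (j : ℕ) = (k : ℕ) then -(deathRate n s1 k + birthRate n s0 k)
      else 0
    else 0

/-! ### Auxiliary lemmas -/

section Aux

open Matrix

/-- Summing an indicator supported at nat value `c` over `Fin N`. -/
lemma fin_sum_ite_coe {N : ℕ} (c : ℕ) (f : Fin N → ℝ) :
    ∑ k : Fin N, (if (k : ℕ) = c then f k else 0)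
      = if h : c < N then f ⟨c, h⟩ else 0 := by
  by_cases h : c < N
  · rw [dif_pos h,
      Finset.sum_congr rfl fun (k : Fin N) _ =>
        (if_congr (by simp [Fin.ext_iff]) rfl rfl :
          (if (k : ℕ) = c then f k else 0) = if k = (⟨c, h⟩ : Fin N) then f k else 0)]
    simp
  · rw [dif_neg h]
    refine Finset.sum_eq_zero fun k _ => ?_
    have hk := k.isLt
    rw [if_neg]; omega

/-- Summing an indicator with the shifted condition `k + 1 = c` over `Fin N`. -/
lemma fin_sum_ite_succ {N : ℕ} (c : ℕ) (f : Fin N → ℝ) :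
    ∑ k : Fin N, (if (k : ℕ) + 1 = c then f k else 0)
      = if h : 0 < c ∧ c ≤ N then f ⟨c - 1, by omega⟩ else 0 := by
  by_cases h : 0 < c ∧ c ≤ N
  · obtain ⟨h1, h2⟩ := h
    rw [dif_pos ⟨h1, h2⟩,
      Finset.sum_congr rfl fun (k : Fin N) _ =>
        (if_congr (by simp only [Fin.ext_iff]; omega) rfl rfl :
          (if (k : ℕ) + 1 = c then f k else 0)
            = if k = (⟨c - 1, by omega⟩ : Fin N) then f k else 0)]
    simp
  · rw [dif_neg h]
    refine Finset.sum_eq_zero fun k _ => ?_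
    have hk := k.isLt
    rw [if_neg]; omega

lemma Qmat_entry_zero {n s0 s1 : ℕ} {i j : Fin (n + 1)}
    (hi : s1 ≤ (i : ℕ) ∧ (i : ℕ) + s0 ≤ n)
    (hj : (j : ℕ) < s1 ∨ n < (j : ℕ) + s0) : Qmat n s0 s1 i j = 0 := by
  unfold Qmat
  rw [if_pos hi]
  split_ifs with h1 h2 h3
  · have hi1 : (i : ℕ) = s1 := by omega
    have hc : ((i : ℕ) : ℝ) = (s1 : ℝ) := by exact_mod_cast congrArg (Nat.cast (R := ℝ)) hi1
    unfold deathRate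
    rw [hc]; ring
  · have hi2 : (i : ℕ) + s0 = n := by omega
    have hc : ((n : ℕ) : ℝ) = ((i : ℕ) : ℝ) + (s0 : ℝ) := by exact_mod_cast hi2.symm
    unfold birthRate
    rw [hc]; ring
  · exfalso; omega
  · rfl

lemma Qmat_row_eq {n s0 s1 : ℕ} {j : Fin (n + 1)}
    (hj : s1 ≤ (j : ℕ) ∧ (j : ℕ) + s0 ≤ n) (k : Fin (n + 1)) :
    Qmat n s0 s1 j k =
      (if (k : ℕ) + 1 = (j : ℕ) then deathRate n s1 j else 0)
      + (if (k : ℕ) = (j : ℕ) + 1 then birthRate n s0 j else 0)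
      + (if (k : ℕ) = (j : ℕ) then -(deathRate n s1 j + birthRate n s0 j) else 0) := by
  unfold Qmat
  rw [if_pos hj]
  split_ifs <;> first | (exfalso; omega) | ring

lemma deathRate_zero_of {n s1 : ℕ} {j : Fin (n + 1)}
    (hj : s1 ≤ (j : ℕ)) (h0 : (j : ℕ) = 0) : deathRate n s1 (j : ℕ) = 0 := by
  have hs1 : s1 = 0 := by omega
  unfold deathRate
  rw [h0, hs1]
  norm_num

lemma birthRate_zero_of {n s0 : ℕ} {j : Fin (n + 1)}
    (hj : (j : ℕ) + s0 ≤ n) (h0 : (j : ℕ) = n) : birthRate n s0 (j : ℕ) = 0 := by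
  have hs0 : s0 = 0 := by omega
  unfold birthRate
  rw [h0, hs0]
  push_cast
  ring

lemma Qmat_row_sum {n s0 s1 : ℕ} (j : Fin (n + 1)) :
    ∑ k, Qmat n s0 s1 j k = 0 := by
  by_cases hj : s1 ≤ (j : ℕ) ∧ (j : ℕ) + s0 ≤ n
  · rw [Finset.sum_congr rfl fun k _ => Qmat_row_eq hj k]
    rw [Finset.sum_add_distrib, Finset.sum_add_distrib, fin_sum_ite_succ,
      fin_sum_ite_coe, fin_sum_ite_coe]
    have h1 : (if h : 0 < (j : ℕ) ∧ (j : ℕ) ≤ n + 1 then deathRate n s1 j else 0)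
        = deathRate n s1 j := by
      split_ifs with h
      · rfl
      · have h0 : (j : ℕ) = 0 := by have := j.isLt; omega
        rw [deathRate_zero_of hj.1 h0]
    have h2 : (if h : (j : ℕ) + 1 < n + 1 then birthRate n s0 j else 0)
        = birthRate n s0 j := by
      split_ifs with h
      · rfl
      · have h0 : (j : ℕ) = n := by have := j.isLt; omega
        rw [birthRate_zero_of hj.2 h0]
    rw [h1, h2, dif_pos j.isLt]
    ring
  · refine Finset.sum_eq_zero fun k _ => ?_
    unfold Qmat
    rw [if_neg hj]

lemma Qmat_row_dot {n s0 s1 : ℕ} (hn : 2 ≤ n) {j : Fin (n + 1)}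
    (hj : s1 ≤ (j : ℕ) ∧ (j : ℕ) + s0 ≤ n) :
    ∑ k : Fin (n + 1), ((k : ℕ) : ℝ) * Qmat n s0 s1 j k
      = ((s1 : ℝ) * n - ((s0 : ℝ) + s1) * ((j : ℕ) : ℝ)) / ((n : ℝ) - 1) := by
  have hne : ((n : ℝ) - 1) ≠ 0 := by
    have : (2 : ℝ) ≤ (n : ℝ) := by exact_mod_cast hn
    nlinarith
  have step : ∀ k : Fin (n + 1), ((k : ℕ) : ℝ) * Qmat n s0 s1 j k =
      (if (k : ℕ) + 1 = (j : ℕ) then ((k : ℕ) : ℝ) * deathRate n s1 j else 0)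
      + (if (k : ℕ) = (j : ℕ) + 1 then ((k : ℕ) : ℝ) * birthRate n s0 j else 0)
      + (if (k : ℕ) = (j : ℕ) then
          ((k : ℕ) : ℝ) * -(deathRate n s1 j + birthRate n s0 j) else 0) := by
    intro k
    rw [Qmat_row_eq hj k]
    split_ifs <;> ring
  rw [Finset.sum_congr rfl fun k _ => step k]
  rw [Finset.sum_add_distrib, Finset.sum_add_distrib, fin_sum_ite_succ,
    fin_sum_ite_coe, fin_sum_ite_coe]
  have h1 : (if h : 0 < (j : ℕ) ∧ (j : ℕ) ≤ n + 1
        then (((⟨(j : ℕ) - 1, by omega⟩ : Fin (n + 1)) : ℕ) : ℝ) * deathRate n s1 j else 0)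
      = (((j : ℕ) : ℝ) - 1) * deathRate n s1 j := by
    split_ifs with h
    · congr 1
      simp only []
      push_cast [Nat.cast_sub h.1]
      ring
    · have h0 : (j : ℕ) = 0 := by have := j.isLt; omega
      rw [deathRate_zero_of hj.1 h0]
      ring
  have h2 : (if h : (j : ℕ) + 1 < n + 1
        then (((⟨(j : ℕ) + 1, h⟩ : Fin (n + 1)) : ℕ) : ℝ) * birthRate n s0 j else 0)
      = (((j : ℕ) : ℝ) + 1) * birthRate n s0 j := by
    split_ifs with h
    · push_cast
      ring
    · have h0 : (j : ℕ) = n := by have := j.isLt; omega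
      rw [birthRate_zero_of hj.2 h0]
      ring
  rw [h1, h2, dif_pos j.isLt]
  unfold deathRate birthRate
  field_simp
  ring

lemma vecMul_pow_support (n s0 s1 : ℕ) (p0 : Fin (n + 1) → ℝ)
    (hsupp : ∀ k : Fin (n + 1), ((k : ℕ) < s1 ∨ n < (k : ℕ) + s0) → p0 k = 0) :
    ∀ m : ℕ, ∀ j : Fin (n + 1), ((j : ℕ) < s1 ∨ n < (j : ℕ) + s0) →
      Matrix.vecMul p0 (Qmat n s0 s1 ^ m) j = 0 := by
  intro m
  induction m with
  | zero =>
    intro j hj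
    rw [pow_zero, Matrix.vecMul_one]
    exact hsupp j hj
  | succ m ih =>
    intro j hj
    rw [pow_succ, ← Matrix.vecMul_vecMul]
    show (Matrix.vecMul p0 (Qmat n s0 s1 ^ m)) ⬝ᵥ (fun i => Qmat n s0 s1 i j) = 0
    unfold dotProduct
    refine Finset.sum_eq_zero fun i _ => ?_
    beta_reduce
    by_cases hi : s1 ≤ (i : ℕ) ∧ (i : ℕ) + s0 ≤ n
    · rw [Qmat_entry_zero hi hj, mul_zero]
    · rw [ih i (by omega), zero_mul]

lemma vecMul_pow_mass (n s0 s1 : ℕ) (p0 : Fin (n + 1) → ℝ) (hsum : ∑ k, p0 k = 1) :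
    ∀ m : ℕ, ∑ j, Matrix.vecMul p0 (Qmat n s0 s1 ^ m) j = if m = 0 then 1 else 0 := by
  intro m
  match m with
  | 0 => rw [pow_zero]; simp [Matrix.vecMul_one, hsum]
  | (m + 1) =>
    rw [if_neg (Nat.succ_ne_zero m), pow_succ]
    have : ∀ j, Matrix.vecMul p0 (Qmat n s0 s1 ^ m * Qmat n s0 s1) j
        = ∑ i : Fin (n + 1), Matrix.vecMul p0 (Qmat n s0 s1 ^ m) i * Qmat n s0 s1 i j := by
      intro j
      rw [← Matrix.vecMul_vecMul]
      rfl
    rw [Finset.sum_congr rfl fun j _ => this j, Finset.sum_comm]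
    refine Finset.sum_eq_zero fun i _ => ?_
    rw [← Finset.mul_sum, Qmat_row_sum, mul_zero]

end Aux

/-- The mean `m(t) = Σ_k k·p_k(t)` of the distribution `p(t) = p(0)e^{tQ}` of
the voter model birth-and-death chain with stubborn nodes satisfies the linear
ODE `m'(t) = (s1·n - (s0 + s1)·m(t))/(n - 1)`. -/
theorem mean_satisfies_ode (n s0 s1 : ℕ) (hn : 2 ≤ n)
    (hpos : 0 < s0 + s1) (hle : s0 + s1 ≤ n)
    (p0 : Fin (n + 1) → ℝ) (hp0 : ∀ k, 0 ≤ p0 k) (hsum : ∑ k, p0 k = 1)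
    (hsupp : ∀ k : Fin (n + 1), ((k : ℕ) < s1 ∨ n < (k : ℕ) + s0) → p0 k = 0) :
    ∀ t : ℝ,
      HasDerivAt
        (fun t : ℝ => ∑ k : Fin (n + 1),
          ((k : ℕ) : ℝ) * Matrix.vecMul p0 (NormedSpace.exp (t • Qmat n s0 s1)) k)
        (((s1 : ℝ) * n - ((s0 : ℝ) + s1) *
            (∑ k : Fin (n + 1),
              ((k : ℕ) : ℝ) * Matrix.vecMul p0 (NormedSpace.exp (t • Qmat n s0 s1)) k)) /
          ((n : ℝ) - 1)) t := by
  intro t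
  letI : SeminormedRing (Matrix (Fin (n + 1)) (Fin (n + 1)) ℝ) := Matrix.linftyOpSemiNormedRing
  letI : NormedRing (Matrix (Fin (n + 1)) (Fin (n + 1)) ℝ) := Matrix.linftyOpNormedRing
  letI : NormedAlgebra ℝ (Matrix (Fin (n + 1)) (Fin (n + 1)) ℝ) := Matrix.linftyOpNormedAlgebra
  -- a family of continuous linear functionals
  have hL : ∀ g : Fin (n + 1) → ℝ, ∃ L : Matrix (Fin (n + 1)) (Fin (n + 1)) ℝ →L[ℝ] ℝ,
      ∀ M, L M = ∑ k, g k * Matrix.vecMul p0 M k := by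
    intro g
    refine ⟨LinearMap.toContinuousLinearMap
      { toFun := fun M => ∑ k, g k * Matrix.vecMul p0 M k
        map_add' := ?_
        map_smul' := ?_ }, fun M => rfl⟩
    · intro A B
      simp [Matrix.vecMul_add, mul_add, Finset.sum_add_distrib]
    · intro c A
      simp only [Matrix.vecMul, dotProduct, Matrix.smul_apply, smul_eq_mul,
        RingHom.id_apply]
      rw [Finset.mul_sum]
      refine Finset.sum_congr rfl fun k _ => ?_
      rw [show (∑ i, p0 i * (c * A i k)) = c * ∑ i, p0 i * A i k by
        rw [Finset.mul_sum]; exact Finset.sum_congr rfl fun i _ => by ring]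
      ring
  -- expansion of a functional applied to the matrix exponential
  have hexp : ∀ (L : Matrix (Fin (n + 1)) (Fin (n + 1)) ℝ →L[ℝ] ℝ) (u : ℝ),
      L (NormedSpace.exp (u • (Qmat n s0 s1)))
        = ∑' m : ℕ, (((m.factorial : ℝ))⁻¹ * u ^ m) * L ((Qmat n s0 s1) ^ m) := by
    intro L u
    rw [NormedSpace.exp_eq_tsum ℝ]
    rw [L.map_tsum (NormedSpace.expSeries_summable' (𝕂 := ℝ) (u • (Qmat n s0 s1)))]
    refine tsum_congr fun m => ?_
    rw [smul_pow, map_smul, map_smul, smul_eq_mul, smul_eq_mul, mul_assoc]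
  -- conservation of total mass
  have hmass : ∀ u : ℝ, ∑ j, Matrix.vecMul p0 (NormedSpace.exp (u • (Qmat n s0 s1))) j = 1 := by
    intro u
    obtain ⟨Lm, hLm⟩ := hL fun _ => 1
    have e1 : ∑ j, Matrix.vecMul p0 (NormedSpace.exp (u • (Qmat n s0 s1))) j
        = Lm (NormedSpace.exp (u • (Qmat n s0 s1))) := by
      rw [hLm]; simp
    rw [e1, hexp Lm u]
    rw [tsum_eq_single 0]
    · rw [hLm]
      simp only [Nat.factorial_zero, Nat.cast_one, inv_one, pow_zero, mul_one, one_mul, pow_zero]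
      have := vecMul_pow_mass n s0 s1 p0 hsum 0
      simp only [if_pos rfl] at this
      simpa using this
    · intro m hm
      rw [hLm]
      have := vecMul_pow_mass n s0 s1 p0 hsum m
      rw [if_neg hm] at this
      simp only [one_mul]
      rw [this, mul_zero]
  -- support preservation
  have hsupp' : ∀ (u : ℝ) (j : Fin (n + 1)), ((j : ℕ) < s1 ∨ n < (j : ℕ) + s0) →
      Matrix.vecMul p0 (NormedSpace.exp (u • (Qmat n s0 s1))) j = 0 := by
    intro u j hj
    obtain ⟨Lj, hLj⟩ := hL fun k => if k = j then 1 else 0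
    have key : ∀ M, Lj M = Matrix.vecMul p0 M j := by
      intro M
      rw [hLj]
      rw [Finset.sum_congr rfl fun k _ => (by split_ifs with h <;> simp [h] :
        (if k = j then (1 : ℝ) else 0) * Matrix.vecMul p0 M k
          = if k = j then Matrix.vecMul p0 M k else 0)]
      rw [Finset.sum_ite_eq' Finset.univ j fun k => Matrix.vecMul p0 M k]
      simp
    rw [← key, hexp Lj u]
    have : ∀ m : ℕ, (((m.factorial : ℝ))⁻¹ * u ^ m) * Lj ((Qmat n s0 s1) ^ m) = 0 := by
      intro m
      rw [key, vecMul_pow_support n s0 s1 p0 hsupp m j hj, mul_zero]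
    rw [tsum_congr this, tsum_zero]
  -- the mean functional
  obtain ⟨Lφ, hLφ⟩ := hL fun k => ((k : ℕ) : ℝ)
  -- derivative of the exponential
  have hD : HasDerivAt (fun u : ℝ => NormedSpace.exp (u • (Qmat n s0 s1)))
      (NormedSpace.exp (t • (Qmat n s0 s1)) * (Qmat n s0 s1)) t := hasDerivAt_exp_smul_const (Qmat n s0 s1) t
  have hd2 : HasDerivAt (fun u : ℝ => Lφ (NormedSpace.exp (u • (Qmat n s0 s1))))
      (Lφ (NormedSpace.exp (t • (Qmat n s0 s1)) * (Qmat n s0 s1))) t := Lφ.hasFDerivAt.comp_hasDerivAt t hD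
  -- compute the derivative value
  have hne : ((n : ℝ) - 1) ≠ 0 := by
    have : (2 : ℝ) ≤ (n : ℝ) := by exact_mod_cast hn
    nlinarith
  set w : Fin (n + 1) → ℝ := Matrix.vecMul p0 (NormedSpace.exp (t • (Qmat n s0 s1))) with hw
  have hval : Lφ (NormedSpace.exp (t • (Qmat n s0 s1)) * (Qmat n s0 s1))
      = (((s1 : ℝ) * n - ((s0 : ℝ) + s1) * (∑ k : Fin (n + 1), ((k : ℕ) : ℝ) * w k))
          / ((n : ℝ) - 1)) := by
    rw [hLφ]
    have e1 : ∀ k : Fin (n + 1),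
        Matrix.vecMul p0 (NormedSpace.exp (t • (Qmat n s0 s1)) * (Qmat n s0 s1)) k = ∑ i : Fin (n + 1), w i * (Qmat n s0 s1) i k := by
      intro k
      rw [← Matrix.vecMul_vecMul]
      rfl
    calc ∑ k : Fin (n + 1), ((k : ℕ) : ℝ)
          * Matrix.vecMul p0 (NormedSpace.exp (t • (Qmat n s0 s1)) * (Qmat n s0 s1)) k
        = ∑ k : Fin (n + 1), ∑ i : Fin (n + 1), w i * (((k : ℕ) : ℝ) * (Qmat n s0 s1) i k) := by
          refine Finset.sum_congr rfl fun k _ => ?_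
          rw [e1 k, Finset.mul_sum]
          exact Finset.sum_congr rfl fun i _ => by ring
      _ = ∑ i : Fin (n + 1), w i * ∑ k : Fin (n + 1), ((k : ℕ) : ℝ) * (Qmat n s0 s1) i k := by
          rw [Finset.sum_comm]
          exact Finset.sum_congr rfl fun i _ => by rw [Finset.mul_sum]
      _ = ∑ i : Fin (n + 1), w i * (((s1 : ℝ) * n - ((s0 : ℝ) + s1) * ((i : ℕ) : ℝ)) / ((n : ℝ) - 1)) := by
          refine Finset.sum_congr rfl fun i _ => ?_
          by_cases hi : s1 ≤ (i : ℕ) ∧ (i : ℕ) + s0 ≤ n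
          · rw [Qmat_row_dot hn hi]
          · rw [hw, hsupp' t i (by omega), zero_mul, zero_mul]
      _ = ∑ i : Fin (n + 1), (((s1 : ℝ) * n) * w i
            - ((s0 : ℝ) + s1) * (((i : ℕ) : ℝ) * w i)) / ((n : ℝ) - 1) := by
          exact Finset.sum_congr rfl fun i _ => by ring
      _ = (((s1 : ℝ) * n) * (∑ i : Fin (n + 1), w i)
            - ((s0 : ℝ) + s1) * ∑ i : Fin (n + 1), ((i : ℕ) : ℝ) * w i) / ((n : ℝ) - 1) := by
          rw [← Finset.sum_div, Finset.sum_sub_distrib, ← Finset.mul_sum, ← Finset.mul_sum]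
      _ = (((s1 : ℝ) * n - ((s0 : ℝ) + s1) * (∑ k : Fin (n + 1), ((k : ℕ) : ℝ) * w k))
            / ((n : ℝ) - 1)) := by
          rw [hmass t]
          ring_nf
  have hfun : (fun u : ℝ => Lφ (NormedSpace.exp (u • (Qmat n s0 s1))))
      = fun u : ℝ => ∑ k : Fin (n + 1),
          ((k : ℕ) : ℝ) * Matrix.vecMul p0 (NormedSpace.exp (u • (Qmat n s0 s1))) k :=
    funext fun u => hLφ _
  rw [hfun, hval] at hd2
  exact hd2
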